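/- Assume μ1 < μ2 and ρ = ρ̂1. Then inf_{(t,s)∈(0,∞)²} g(t,s) = 4(μ2 + (1−2ρ̂1)·μ1), attained at the unique point (t_A, s_A) = ((1−2ρ̂1)/μ1, 1/(μ2 − 2μ1·ρ̂1)); moreover this minimizer lies on the diagonal: t_A = s_A = √(2(1−ρ̂1)/(μ1² + μ2² − 2ρ̂1·μ1·μ2)). -/

import Mathlib

set_option maxHeartbeats 1000000

open Matrix

/-- Covariance matrix `Σ_{ts}` of `(X₁(t), X₂(s))` for a correlated Brownian motion with
correlation `ρ`. -/
noncomputable def covM (ρ t s : ℝ) : Matrix (Fin 2) (Fin 2) ℝ :=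
  !![t, ρ * min t s; ρ * min t s, s]

/-- `g(t,s) = inf { (x,y) Σ_{ts}⁻¹ (x,y)ᵀ : x ≥ 1 + μ₁ t, y ≥ 1 + μ₂ s }`. -/
noncomputable def gfun (ρ μ1 μ2 t s : ℝ) : ℝ :=
  sInf {v : ℝ | ∃ x y : ℝ, 1 + μ1 * t ≤ x ∧ 1 + μ2 * s ≤ y ∧
    v = ![x, y] ⬝ᵥ ((covM ρ t s)⁻¹ *ᵥ ![x, y])}


lemma cpos (r : ℝ) (hr0 : 0 < r) (hr2 : 2*r < 1) : 0 < 1+4*r-4*r^2-16*r^3+16*r^4 := by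
  have h1 : 1+4*r-4*r^2-16*r^3+16*r^4 = (1-2*r)*((1+2*r)*(1+4*r))+16*r^4 := by ring
  rw [h1]
  have h2 : 0 < (1-2*r)*((1+2*r)*(1+4*r)) := by
    apply mul_pos (by linarith)
    apply mul_pos <;> linarith
  nlinarith [pow_pos hr0 4]

lemma cert1 (r X W : ℝ) (hr0 : 0 < r) (hr2 : 2*r < 1) (hX : 0 < X) (hW : 0 ≤ W) :
    0 ≤ 2*(1-r)*X*(X-(1-2*r))^2 + W*((1-2*r)^2 - 2*(1-2*r)*(2-3*r+6*r^2-4*r^3)*X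
      + ((1+4*r-4*r^2-16*r^3+16*r^4)+2*(1-r))*X^2 + (1+4*r-4*r^2-16*r^3+16*r^4)*X*W) := by
  have hc : 0 < 1+4*r-4*r^2-16*r^3+16*r^4 := cpos r hr0 hr2
  have he : 0 < 1-2*r := by linarith
  have hr1 : 0 < 1-r := by linarith
  have key : 4*(1+4*r-4*r^2-16*r^3+16*r^4)*(2*(1-r)*X*(X-(1-2*r))^2
      + W*((1-2*r)^2 - 2*(1-2*r)*(2-3*r+6*r^2-4*r^3)*X
      + ((1+4*r-4*r^2-16*r^3+16*r^4)+2*(1-r))*X^2 + (1+4*r-4*r^2-16*r^3+16*r^4)*X*W))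
      = 8*(1+4*r-4*r^2-16*r^3+16*r^4)*(1-r)*X*(X-(1-2*r)+W/2)^2
      + W*(2*(1+4*r-4*r^2-16*r^3+16*r^4)*X - 2*(1-2*r)*(1-2*r+6*r^2-4*r^3))^2
      + 4*(1-2*r)^2*(4*r*(1-2*r)*(2-r+r^2*(1-2*r)*(2-r)))*W
      + 4*(1+4*r-4*r^2-16*r^3+16*r^4)*(1/2+r/2+4*r*(1-2*r)+(2*r*(1-2*r))^2)*X*W^2 := by
    ring
  have h1 : 0 ≤ 8*(1+4*r-4*r^2-16*r^3+16*r^4)*(1-r)*X*(X-(1-2*r)+W/2)^2 :=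
    mul_nonneg (mul_nonneg (mul_nonneg (by linarith) hr1.le) hX.le) (sq_nonneg _)
  have h2 : 0 ≤ W*(2*(1+4*r-4*r^2-16*r^3+16*r^4)*X - 2*(1-2*r)*(1-2*r+6*r^2-4*r^3))^2 :=
    mul_nonneg hW (sq_nonneg _)
  have h3 : 0 ≤ 4*(1-2*r)^2*(4*r*(1-2*r)*(2-r+r^2*(1-2*r)*(2-r)))*W := by
    apply mul_nonneg _ hW
    apply mul_nonneg (by positivity)
    apply mul_nonneg (by positivity)
    nlinarith [sq_nonneg r, mul_pos hr0 hr0]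
  have h4 : 0 ≤ 4*(1+4*r-4*r^2-16*r^3+16*r^4)*(1/2+r/2+4*r*(1-2*r)+(2*r*(1-2*r))^2)*X*W^2 := by
    apply mul_nonneg _ (sq_nonneg W)
    apply mul_nonneg _ hX.le
    apply mul_nonneg (by linarith)
    linarith [mul_pos hr0 he, sq_nonneg (2*r*(1-2*r))]
  have h0 : 0 ≤ 4*(1+4*r-4*r^2-16*r^3+16*r^4)*(2*(1-r)*X*(X-(1-2*r))^2
      + W*((1-2*r)^2 - 2*(1-2*r)*(2-3*r+6*r^2-4*r^3)*X
      + ((1+4*r-4*r^2-16*r^3+16*r^4)+2*(1-r))*X^2 + (1+4*r-4*r^2-16*r^3+16*r^4)*X*W)) := by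
    rw [key]; linarith
  have hk : 0 < 4*(1+4*r-4*r^2-16*r^3+16*r^4) := by linarith
  exact (mul_nonneg_iff_of_pos_left hk).mp h0

lemma cert1_eq (r X W : ℝ) (hr0 : 0 < r) (hr2 : 2*r < 1) (hX : 0 < X) (hW : 0 ≤ W)
    (heq : 2*(1-r)*X*(X-(1-2*r))^2 + W*((1-2*r)^2 - 2*(1-2*r)*(2-3*r+6*r^2-4*r^3)*X
      + ((1+4*r-4*r^2-16*r^3+16*r^4)+2*(1-r))*X^2 + (1+4*r-4*r^2-16*r^3+16*r^4)*X*W) = 0) :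
    W = 0 ∧ X = 1-2*r := by
  have hc : 0 < 1+4*r-4*r^2-16*r^3+16*r^4 := cpos r hr0 hr2
  have he : 0 < 1-2*r := by linarith
  have hr1 : 0 < 1-r := by linarith
  have key : 4*(1+4*r-4*r^2-16*r^3+16*r^4)*(2*(1-r)*X*(X-(1-2*r))^2
      + W*((1-2*r)^2 - 2*(1-2*r)*(2-3*r+6*r^2-4*r^3)*X
      + ((1+4*r-4*r^2-16*r^3+16*r^4)+2*(1-r))*X^2 + (1+4*r-4*r^2-16*r^3+16*r^4)*X*W))
      = 8*(1+4*r-4*r^2-16*r^3+16*r^4)*(1-r)*X*(X-(1-2*r)+W/2)^2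
      + W*(2*(1+4*r-4*r^2-16*r^3+16*r^4)*X - 2*(1-2*r)*(1-2*r+6*r^2-4*r^3))^2
      + 4*(1-2*r)^2*(4*r*(1-2*r)*(2-r+r^2*(1-2*r)*(2-r)))*W
      + 4*(1+4*r-4*r^2-16*r^3+16*r^4)*(1/2+r/2+4*r*(1-2*r)+(2*r*(1-2*r))^2)*X*W^2 := by
    ring
  rw [heq, mul_zero] at key
  have h1 : 0 ≤ 8*(1+4*r-4*r^2-16*r^3+16*r^4)*(1-r)*X*(X-(1-2*r)+W/2)^2 :=
    mul_nonneg (mul_nonneg (mul_nonneg (by linarith) hr1.le) hX.le) (sq_nonneg _)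
  have h2 : 0 ≤ W*(2*(1+4*r-4*r^2-16*r^3+16*r^4)*X - 2*(1-2*r)*(1-2*r+6*r^2-4*r^3))^2 :=
    mul_nonneg hW (sq_nonneg _)
  have hψ : 0 < 4*(1-2*r)^2*(4*r*(1-2*r)*(2-r+r^2*(1-2*r)*(2-r))) := by
    apply mul_pos (by positivity)
    apply mul_pos (by positivity)
    nlinarith [sq_nonneg r, mul_pos hr0 hr0]
  have h4 : 0 ≤ 4*(1+4*r-4*r^2-16*r^3+16*r^4)*(1/2+r/2+4*r*(1-2*r)+(2*r*(1-2*r))^2)*X*W^2 := by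
    apply mul_nonneg _ (sq_nonneg W)
    apply mul_nonneg _ hX.le
    apply mul_nonneg (by linarith)
    linarith [mul_pos hr0 he, sq_nonneg (2*r*(1-2*r))]
  have hW0 : W = 0 := by
    rcases lt_or_eq_of_le hW with hWp | hWe
    · exfalso
      have h3 : 0 < 4*(1-2*r)^2*(4*r*(1-2*r)*(2-r+r^2*(1-2*r)*(2-r)))*W := mul_pos hψ hWp
      linarith
    · exact hWe.symm
  subst hW0
  refine ⟨rfl, ?_⟩
  have e1 : 2*(1-r)*X*(X-(1-2*r))^2 = 0 := by linarith
  have h8 : 0 < 2*(1-r)*X := by positivity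
  have h7 : (X-(1-2*r))^2 = 0 := by
    rcases mul_eq_zero.1 e1 with h | h
    · exact absurd h h8.ne'
    · exact h
  have := pow_eq_zero_iff (two_ne_zero) |>.1 h7
  linarith

lemma cert2 (r Y W : ℝ) (hr0 : 0 < r) (hr2 : 2*r < 1) (hY : 0 < Y) (hW : 0 ≤ W) :
    0 ≤ 2*(1-r)*Y*(Y-(1-2*r)+((1-2*r)/2)*W)^2 + W*((Y-(1-2*r))^2 + (1-2*r)^2*((1+r)/2)*Y*W) := by
  have he : 0 < 1-2*r := by linarith
  have hr1 : 0 < 1-r := by linarith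
  have h1 : 0 ≤ 2*(1-r)*Y*(Y-(1-2*r)+((1-2*r)/2)*W)^2 :=
    mul_nonneg (mul_nonneg (by linarith) hY.le) (sq_nonneg _)
  have h2 : 0 ≤ W*((Y-(1-2*r))^2 + (1-2*r)^2*((1+r)/2)*Y*W) := by
    apply mul_nonneg hW
    have : 0 ≤ (1-2*r)^2*((1+r)/2)*Y*W :=
      mul_nonneg (mul_nonneg (mul_nonneg (sq_nonneg _) (by linarith)) hY.le) hW
    linarith [sq_nonneg (Y-(1-2*r))]
  linarith

lemma cert2_eq (r Y W : ℝ) (hr0 : 0 < r) (hr2 : 2*r < 1) (hY : 0 < Y) (hW : 0 ≤ W)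
    (heq : 2*(1-r)*Y*(Y-(1-2*r)+((1-2*r)/2)*W)^2
      + W*((Y-(1-2*r))^2 + (1-2*r)^2*((1+r)/2)*Y*W) = 0) :
    W = 0 ∧ Y = 1-2*r := by
  have he : 0 < 1-2*r := by linarith
  have hr1 : 0 < 1-r := by linarith
  have h1 : 0 ≤ 2*(1-r)*Y*(Y-(1-2*r)+((1-2*r)/2)*W)^2 :=
    mul_nonneg (mul_nonneg (by linarith) hY.le) (sq_nonneg _)
  have h2 : 0 ≤ W*((Y-(1-2*r))^2 + (1-2*r)^2*((1+r)/2)*Y*W) := by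
    apply mul_nonneg hW
    have : 0 ≤ (1-2*r)^2*((1+r)/2)*Y*W :=
      mul_nonneg (mul_nonneg (mul_nonneg (sq_nonneg _) (by linarith)) hY.le) hW
    linarith [sq_nonneg (Y-(1-2*r))]
  have hW0 : W = 0 := by
    by_contra hW0
    have hWp : 0 < W := lt_of_le_of_ne hW (Ne.symm hW0)
    have e2 : W*((Y-(1-2*r))^2 + (1-2*r)^2*((1+r)/2)*Y*W) = 0 := by linarith
    have e3 : (Y-(1-2*r))^2 + (1-2*r)^2*((1+r)/2)*Y*W = 0 := by
      rcases mul_eq_zero.1 e2 with h | h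
      · exact absurd h hW0
      · exact h
    have e4 : 0 < (1-2*r)^2*((1+r)/2)*Y*W :=
      mul_pos (mul_pos (mul_pos (by positivity) (by linarith)) hY) hWp
    nlinarith [sq_nonneg (Y-(1-2*r))]
  subst hW0
  refine ⟨rfl, ?_⟩
  have e1 : 2*(1-r)*Y*(Y-(1-2*r)+((1-2*r)/2)*0)^2 = 0 := by linarith
  have h8 : 0 < 2*(1-r)*Y := by positivity
  have h7 : (Y-(1-2*r)+((1-2*r)/2)*0)^2 = 0 := by
    rcases mul_eq_zero.1 e1 with h | h
    · exact absurd h h8.ne'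
    · exact h
  have := pow_eq_zero_iff (two_ne_zero) |>.1 h7
  linarith

lemma kkt1 (ρ μ1 μ2 a b : ℝ)
    (hq : 4*μ1*ρ^2 - 2*(μ1+μ2)*ρ + (μ2-μ1) = 0)
    (hr0 : 0 < ρ) (hr2 : 2*ρ < 1) (hμ1 : 0 < μ1) (hμ12 : μ1 < μ2) (hb1 : 1 ≤ b)
    (h1 : μ1*a^2 - 4*(μ2+(1-2*ρ)*μ1)*a + 4*(μ2+(1-2*ρ)*μ1) ≤ 0)
    (h2 : μ2*b^2 - 4*(μ2+(1-2*ρ)*μ1)*b + 4*(μ2+(1-2*ρ)*μ1) ≤ 0) :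
    ρ*b ≤ a := by
  have hμ2 : 0 < μ2 := lt_trans hμ1 hμ12
  have he : 0 < 1-2*ρ := by linarith
  have hV0 : 0 < 4*(μ2+(1-2*ρ)*μ1) := by nlinarith
  have hα0 : 0 < (1-2*ρ)*ρ^2*μ1 + 2*ρ*μ2 := by positivity
  have hNe : (1-2*ρ)^2*(4*((1-2*ρ)*ρ^2*μ1 + 2*ρ*μ2) - ρ^2*(3-2*ρ)^2*(4*(μ2+(1-2*ρ)*μ1)))
      = 4*μ1*ρ*(1-2*ρ)^4*(2-ρ) := by
    linear_combination (8*ρ*(1-2*ρ) - 4*(1-2*ρ)*ρ^2*(3-2*ρ)^2) * hq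
  have hN : 0 < 4*((1-2*ρ)*ρ^2*μ1 + 2*ρ*μ2) - ρ^2*(3-2*ρ)^2*(4*(μ2+(1-2*ρ)*μ1)) := by
    have hrhs : 0 < 4*μ1*ρ*(1-2*ρ)^4*(2-ρ) := by
      apply mul_pos (by positivity); linarith
    nlinarith [hNe, sq_nonneg (1-2*ρ)]
  -- P(ρ b) > 0
  have hP : 0 < μ1*(ρ*b)^2 - 4*(μ2+(1-2*ρ)*μ1)*(ρ*b) + 4*(μ2+(1-2*ρ)*μ1) := by
    have hkey : 4*((1-2*ρ)*ρ^2*μ1 + 2*ρ*μ2)*(1-2*ρ)*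
        (μ1*(ρ*b)^2 - 4*(μ2+(1-2*ρ)*μ1)*(ρ*b) + 4*(μ2+(1-2*ρ)*μ1))
        = (2*((1-2*ρ)*ρ^2*μ1 + 2*ρ*μ2)*b - ρ*(3-2*ρ)*(4*(μ2+(1-2*ρ)*μ1)))^2
        + (4*(μ2+(1-2*ρ)*μ1))*(4*((1-2*ρ)*ρ^2*μ1 + 2*ρ*μ2)
            - ρ^2*(3-2*ρ)^2*(4*(μ2+(1-2*ρ)*μ1)))
        + 8*ρ*((1-2*ρ)*ρ^2*μ1 + 2*ρ*μ2)
            *(-(μ2*b^2 - 4*(μ2+(1-2*ρ)*μ1)*b + 4*(μ2+(1-2*ρ)*μ1))) := by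
      ring
    have hterm : 0 ≤ 8*ρ*((1-2*ρ)*ρ^2*μ1 + 2*ρ*μ2)
        *(-(μ2*b^2 - 4*(μ2+(1-2*ρ)*μ1)*b + 4*(μ2+(1-2*ρ)*μ1))) := by
      apply mul_nonneg (by positivity); linarith
    have hVN : 0 < (4*(μ2+(1-2*ρ)*μ1))*(4*((1-2*ρ)*ρ^2*μ1 + 2*ρ*μ2)
        - ρ^2*(3-2*ρ)^2*(4*(μ2+(1-2*ρ)*μ1))) := mul_pos hV0 hN
    have hpos : 0 < 4*((1-2*ρ)*ρ^2*μ1 + 2*ρ*μ2)*(1-2*ρ) := by positivity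
    nlinarith [hkey, hterm, hVN, sq_nonneg (2*((1-2*ρ)*ρ^2*μ1 + 2*ρ*μ2)*b
      - ρ*(3-2*ρ)*(4*(μ2+(1-2*ρ)*μ1)))]
  have hb2 : μ2*b ≤ 4*(μ2+(1-2*ρ)*μ1) := by nlinarith
  have hb1' : μ1*b ≤ 4*(μ2+(1-2*ρ)*μ1) := by nlinarith
  by_contra hcon
  push_neg at hcon
  have h3 : μ1*(a+ρ*b) < 4*(μ2+(1-2*ρ)*μ1) := by nlinarith
  nlinarith [mul_pos (sub_pos.2 hcon) (sub_pos.2 h3)]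

lemma hid1 (ρ μ1 μ2 t s : ℝ)
    (hq : 4*μ1*ρ^2 - 2*(μ1+μ2)*ρ + (μ2-μ1) = 0) :
    μ1^2*(1-2*ρ)^6*((s*(1+μ1*t)^2 - 2*ρ*t*(1+μ1*t)*(1+μ2*s) + t*(1+μ2*s)^2)
        - 4*(μ2+(1-2*ρ)*μ1)*(t*s-ρ^2*t^2))
      = (1-2*ρ)^4*μ1*(2*(1-ρ)*(μ1*t)*((μ1*t)-(1-2*ρ))^2
        + (μ1*(s-t))*((1-2*ρ)^2 - 2*(1-2*ρ)*(2-3*ρ+6*ρ^2-4*ρ^3)*(μ1*t)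
          + ((1+4*ρ-4*ρ^2-16*ρ^3+16*ρ^4)+2*(1-ρ))*(μ1*t)^2
          + (1+4*ρ-4*ρ^2-16*ρ^3+16*ρ^4)*(μ1*t)*(μ1*(s-t)))) := by
  linear_combination (-2*t*s*μ1^2 + 18*t*s*ρ*μ1^2 - 60*t*s*ρ^2*μ1^2 + 80*t*s*ρ^3*μ1^2
    - 96*t*s*ρ^5*μ1^2 + 64*t*s*ρ^6*μ1^2 + 1*t*s^2*μ1^2*μ2 + 1*t*s^2*μ1^3
    - 10*t*s^2*ρ*μ1^2*μ2 - 6*t*s^2*ρ*μ1^3 + 40*t*s^2*ρ^2*μ1^2*μ2 + 4*t*s^2*ρ^2*μ1^3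
    - 80*t*s^2*ρ^3*μ1^2*μ2 + 48*t*s^2*ρ^3*μ1^3 + 80*t*s^2*ρ^4*μ1^2*μ2 - 144*t*s^2*ρ^4*μ1^3
    - 32*t*s^2*ρ^5*μ1^2*μ2 + 160*t*s^2*ρ^5*μ1^3 - 64*t*s^2*ρ^6*μ1^3 + 4*t^2*ρ^2*μ1^2
    - 40*t^2*ρ^3*μ1^2 + 160*t^2*ρ^4*μ1^2 - 320*t^2*ρ^5*μ1^2 + 320*t^2*ρ^6*μ1^2
    - 128*t^2*ρ^7*μ1^2 - 2*t^2*s*ρ*μ1^3 + 20*t^2*s*ρ^2*μ1^3 - 80*t^2*s*ρ^3*μ1^3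
    + 160*t^2*s*ρ^4*μ1^3 - 160*t^2*s*ρ^5*μ1^3 + 64*t^2*s*ρ^6*μ1^3) * hq

lemma hid2 (ρ μ1 μ2 t s : ℝ)
    (hq : 4*μ1*ρ^2 - 2*(μ1+μ2)*ρ + (μ2-μ1) = 0) :
    μ1^2*(1-2*ρ)^6*((s*(1+μ1*t)^2 - 2*ρ*s*(1+μ1*t)*(1+μ2*s) + t*(1+μ2*s)^2)
        - 4*(μ2+(1-2*ρ)*μ1)*(s*t-ρ^2*s^2))
      = (1-2*ρ)^4*μ1*(2*(1-ρ)*(μ1*s)*((μ1*s)-(1-2*ρ)+((1-2*ρ)/2)*(μ1*(t-s)))^2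
        + (μ1*(t-s))*(((μ1*s)-(1-2*ρ))^2 + (1-2*ρ)^2*((1+ρ)/2)*(μ1*s)*(μ1*(t-s)))) := by
  linear_combination (-2*s^2*ρ*μ1^2 + 24*s^2*ρ^2*μ1^2 - 120*s^2*ρ^3*μ1^2 + 320*s^2*ρ^4*μ1^2
    - 480*s^2*ρ^5*μ1^2 + 384*s^2*ρ^6*μ1^2 - 128*s^2*ρ^7*μ1^2 - 2*t*s*μ1^2 + 20*t*s*ρ*μ1^2
    - 80*t*s*ρ^2*μ1^2 + 160*t*s*ρ^3*μ1^2 - 160*t*s*ρ^4*μ1^2 + 64*t*s*ρ^5*μ1^2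
    + 1*t*s^2*μ1^2*μ2 + 1*t*s^2*μ1^3 - 10*t*s^2*ρ*μ1^2*μ2 - 8*t*s^2*ρ*μ1^3
    + 40*t*s^2*ρ^2*μ1^2*μ2 + 24*t*s^2*ρ^2*μ1^3 - 80*t*s^2*ρ^3*μ1^2*μ2 - 32*t*s^2*ρ^3*μ1^3
    + 80*t*s^2*ρ^4*μ1^2*μ2 + 16*t*s^2*ρ^4*μ1^3 - 32*t*s^2*ρ^5*μ1^2*μ2) * hq


lemma quad_eval (ρ t s x y : ℝ) (hd : t*s - ρ^2*(min t s)^2 ≠ 0) :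
    ![x, y] ⬝ᵥ ((covM ρ t s)⁻¹ *ᵥ ![x, y]) =
      (s*x^2 - 2*ρ*(min t s)*x*y + t*y^2)/(t*s - ρ^2*(min t s)^2) := by
  have hdet : (covM ρ t s).det = t*s - ρ^2*(min t s)^2 := by
    simp [covM, Matrix.det_fin_two_of]; ring
  have h1 : (covM ρ t s)⁻¹ =
      (t*s - ρ^2*(min t s)^2)⁻¹ • !![s, -(ρ*(min t s)); -(ρ*(min t s)), t] := by
    rw [Matrix.inv_def, hdet, Ring.inverse_eq_inv']
    congr 1
    rw [show covM ρ t s = !![t, ρ * min t s; ρ * min t s, s] from rfl,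
      Matrix.adjugate_fin_two]
    norm_num
  rw [h1]
  simp [Matrix.mulVec, dotProduct, Fin.sum_univ_two, Matrix.smul_apply, smul_eq_mul]
  field_simp
  ring



lemma dpos (ρ t s : ℝ) (hrr : 4*ρ^2 ≤ 1) (ht : 0 < t) (hs : 0 < s) :
    0 < t*s - ρ^2*(min t s)^2 := by
  have hmt : min t s ≤ t := min_le_left t s
  have hms : min t s ≤ s := min_le_right t s
  have hm0 : 0 < min t s := lt_min ht hs
  nlinarith [mul_le_mul hmt hms hm0.le ht.le, mul_pos hm0 hm0]

lemma edge_lb (ρ m s t x y B : ℝ) (hB : 0 ≤ B) (hy : B ≤ y) (hd : 0 ≤ t*s - ρ^2*m^2) :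
    B^2*(t*s - ρ^2*m^2) ≤ (s*x^2 - 2*ρ*m*x*y + t*y^2)*s := by
  nlinarith [sq_nonneg (s*x - ρ*m*y), mul_le_mul_of_nonneg_right
    (show B^2 ≤ y^2 by nlinarith) hd]

lemma edge_lb2 (ρ m s t x y A : ℝ) (hA : 0 ≤ A) (hx : A ≤ x) (hd : 0 ≤ t*s - ρ^2*m^2) :
    A^2*(t*s - ρ^2*m^2) ≤ (s*x^2 - 2*ρ*m*x*y + t*y^2)*t := by
  nlinarith [sq_nonneg (t*y - ρ*m*x), mul_le_mul_of_nonneg_right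
    (show A^2 ≤ x^2 by nlinarith) hd]

lemma haux (μ V t : ℝ) (hμ : 0 < μ) (h : (1+μ*t)^2 ≤ V*t) :
    μ*(1+μ*t)^2 - V*(1+μ*t) + V ≤ 0 := by
  nlinarith [mul_le_mul_of_nonneg_left h hμ.le]

lemma sab_lem (ρ s m a b : ℝ) (hr0 : 0 < ρ) (hms : m ≤ s) (hb : 0 < b) (hs : 0 < s)
    (hk : ρ*b ≤ a) : ρ*m*b ≤ s*a := by
  nlinarith [mul_le_mul_of_nonneg_right (mul_le_mul_of_nonneg_left hms hr0.le) hb.le,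
    mul_le_mul_of_nonneg_left hk hs.le]

lemma kkt2_lem (ρ μ1 μ2 t s : ℝ) (hr0 : 0 < ρ) (hr2 : 2*ρ < 1) (hμ1 : 0 < μ1)
    (hμ12 : μ1 < μ2) (ht : 0 < t) (hs : 0 < s) :
    ρ*(min t s)*(1+μ1*t) ≤ t*(1+μ2*s) := by
  have hmt := min_le_left t s
  have hms := min_le_right t s
  have he : (0:ℝ) ≤ 1-2*ρ := by linarith
  have e1 : ρ*(min t s) ≤ t/2 := by
    nlinarith [mul_nonneg hr0.le (sub_nonneg.2 hmt), mul_nonneg ht.le he]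
  have e2a : ρ*(min t s) ≤ s/2 := by
    nlinarith [mul_nonneg hr0.le (sub_nonneg.2 hms), mul_nonneg hs.le he]
  have e2 : ρ*(min t s)*(μ1*t) ≤ t*(μ2*s) := by
    nlinarith [mul_le_mul_of_nonneg_right e2a (mul_nonneg hμ1.le ht.le), mul_pos ht hs]
  nlinarith [e1, e2]

lemma conv_lb (ρ m t s x y a b : ℝ) (hm0 : 0 < m) (hmt : m ≤ t) (hms : m ≤ s)
    (he : 0 ≤ 1-2*ρ) (hx : a ≤ x) (hy : b ≤ y) (hsab : ρ*m*b ≤ s*a) (htb : ρ*m*a ≤ t*b) :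
    s*a^2 - 2*ρ*m*a*b + t*b^2 ≤ s*x^2 - 2*ρ*m*x*y + t*y^2 := by
  have hp : 0 ≤ x-a := by linarith
  have hq' : 0 ≤ y-b := by linarith
  nlinarith [mul_nonneg (sub_nonneg.2 hms) (sq_nonneg (x-a)),
    mul_nonneg (sub_nonneg.2 hmt) (sq_nonneg (y-b)),
    mul_nonneg hm0.le (sq_nonneg ((x-a)-(y-b))),
    mul_nonneg (mul_nonneg (mul_nonneg he hm0.le) hp) hq',
    mul_nonneg hp (sub_nonneg.2 hsab),
    mul_nonneg hq' (sub_nonneg.2 htb)]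

lemma pointwise (ρ μ1 μ2 : ℝ)
    (hq : 4*μ1*ρ^2 - 2*(μ1+μ2)*ρ + (μ2-μ1) = 0)
    (hr0 : 0 < ρ) (hr2 : 2*ρ < 1) (hμ1 : 0 < μ1) (hμ12 : μ1 < μ2)
    (t s x y : ℝ) (ht : 0 < t) (hs : 0 < s)
    (hx : 1+μ1*t ≤ x) (hy : 1+μ2*s ≤ y) :
    4*(μ2+(1-2*ρ)*μ1)*(t*s-ρ^2*(min t s)^2) ≤ s*x^2 - 2*ρ*(min t s)*x*y + t*y^2 := by
  have hμ2 : 0 < μ2 := hμ1.trans hμ12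
  have he : 0 < 1-2*ρ := by linarith
  have hV0 : 0 < 4*(μ2+(1-2*ρ)*μ1) := by positivity
  have hmt : min t s ≤ t := min_le_left t s
  have hms : min t s ≤ s := min_le_right t s
  have hm0 : 0 < min t s := lt_min ht hs
  have ha0 : 0 < 1+μ1*t := by positivity
  have hb0 : 0 < 1+μ2*s := by positivity
  have hrr : 4*ρ^2 ≤ 1 := by nlinarith
  have hd : 0 < t*s-ρ^2*(min t s)^2 := dpos ρ t s hrr ht hs
  rcases le_or_gt (4*(μ2+(1-2*ρ)*μ1)*s) ((1+μ2*s)^2) with hb2 | hb2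
  · have hE := edge_lb ρ (min t s) s t x y (1+μ2*s) hb0.le hy hd.le
    have h2 := mul_le_mul_of_nonneg_right hb2 hd.le
    nlinarith [hE, h2, hs]
  rcases le_or_gt (4*(μ2+(1-2*ρ)*μ1)*t) ((1+μ1*t)^2) with ha2 | ha2
  · have hE := edge_lb2 ρ (min t s) s t x y (1+μ1*t) ha0.le hx hd.le
    have h2 := mul_le_mul_of_nonneg_right ha2 hd.le
    nlinarith [hE, h2, ht]
  · have h1 : μ1*(1+μ1*t)^2 - 4*(μ2+(1-2*ρ)*μ1)*(1+μ1*t) + 4*(μ2+(1-2*ρ)*μ1) ≤ 0 :=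
      haux μ1 (4*(μ2+(1-2*ρ)*μ1)) t hμ1 ha2.le
    have h2 : μ2*(1+μ2*s)^2 - 4*(μ2+(1-2*ρ)*μ1)*(1+μ2*s) + 4*(μ2+(1-2*ρ)*μ1) ≤ 0 :=
      haux μ2 (4*(μ2+(1-2*ρ)*μ1)) s hμ2 hb2.le
    have hkkt1 : ρ*(1+μ2*s) ≤ 1+μ1*t :=
      kkt1 ρ μ1 μ2 (1+μ1*t) (1+μ2*s) hq hr0 hr2 hμ1 hμ12
        (le_add_of_nonneg_right (mul_pos hμ2 hs).le) h1 h2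
    have hsab : ρ*(min t s)*(1+μ2*s) ≤ s*(1+μ1*t) :=
      sab_lem ρ s (min t s) (1+μ1*t) (1+μ2*s) hr0 hms hb0 hs hkkt1
    have hkkt2 : ρ*(min t s)*(1+μ1*t) ≤ t*(1+μ2*s) :=
      kkt2_lem ρ μ1 μ2 t s hr0 hr2 hμ1 hμ12 ht hs
    have hconv := conv_lb ρ (min t s) t s x y (1+μ1*t) (1+μ2*s) hm0 hmt hms he.le
      hx hy hsab hkkt2
    rcases le_total t s with hts | hst
    · have hm : min t s = t := min_eq_left hts
      rw [hm] at hconv ⊢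
      have hcert := cert1 ρ (μ1*t) (μ1*(s-t)) hr0 hr2 (mul_pos hμ1 ht)
        (mul_nonneg hμ1.le (by linarith))
      have hid := hid1 ρ μ1 μ2 t s hq
      have hpos : 0 < μ1^2*(1-2*ρ)^6 := by positivity
      have hpos2 : 0 ≤ (1-2*ρ)^4*μ1 := by positivity
      have hGnn := mul_nonneg hpos2 hcert
      have hCV : 0 ≤ μ1^2*(1-2*ρ)^6*((s*(1+μ1*t)^2 - 2*ρ*t*(1+μ1*t)*(1+μ2*s) + t*(1+μ2*s)^2)
          - 4*(μ2+(1-2*ρ)*μ1)*(t*s-ρ^2*t^2)) := by rw [hid]; exact hGnn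
      have hcorner := (mul_nonneg_iff_of_pos_left hpos).mp hCV
      linarith [hconv, hcorner]
    · have hm : min t s = s := min_eq_right hst
      rw [hm] at hconv ⊢
      have hcert := cert2 ρ (μ1*s) (μ1*(t-s)) hr0 hr2 (mul_pos hμ1 hs)
        (mul_nonneg hμ1.le (by linarith))
      have hid := hid2 ρ μ1 μ2 t s hq
      have hpos : 0 < μ1^2*(1-2*ρ)^6 := by positivity
      have hpos2 : 0 ≤ (1-2*ρ)^4*μ1 := by positivity
      have hGnn := mul_nonneg hpos2 hcert
      have hCV : 0 ≤ μ1^2*(1-2*ρ)^6*((s*(1+μ1*t)^2 - 2*ρ*s*(1+μ1*t)*(1+μ2*s) + t*(1+μ2*s)^2)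
          - 4*(μ2+(1-2*ρ)*μ1)*(s*t-ρ^2*s^2)) := by rw [hid]; exact hGnn
      have hcorner := (mul_nonneg_iff_of_pos_left hpos).mp hCV
      linarith [hconv, hcorner]

theorem statement12 (ρ μ1 μ2 : ℝ)
    (hρ : ρ = (μ1 + μ2 - Real.sqrt ((μ1 + μ2) ^ 2 - 4 * μ1 * (μ2 - μ1))) / (4 * μ1))
    (hμ1 : 0 < μ1) (hμ12 : μ1 < μ2) :
    IsLeast {v : ℝ | ∃ t s : ℝ, 0 < t ∧ 0 < s ∧ v = gfun ρ μ1 μ2 t s}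
        (4 * (μ2 + (1 - 2 * ρ) * μ1)) ∧
      gfun ρ μ1 μ2 ((1 - 2 * ρ) / μ1) (1 / (μ2 - 2 * μ1 * ρ)) =
        4 * (μ2 + (1 - 2 * ρ) * μ1) ∧
      (∀ t s : ℝ, 0 < t → 0 < s →
        gfun ρ μ1 μ2 t s = 4 * (μ2 + (1 - 2 * ρ) * μ1) →
          t = (1 - 2 * ρ) / μ1 ∧ s = 1 / (μ2 - 2 * μ1 * ρ)) ∧
      (1 - 2 * ρ) / μ1 = 1 / (μ2 - 2 * μ1 * ρ) ∧
      (1 - 2 * ρ) / μ1 =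
        Real.sqrt (2 * (1 - ρ) / (μ1 ^ 2 + μ2 ^ 2 - 2 * ρ * μ1 * μ2)) := by
  have hμ2 : 0 < μ2 := hμ1.trans hμ12
  have hμ1' : μ1 ≠ 0 := ne_of_gt hμ1
  have hD : 0 ≤ (μ1+μ2)^2 - 4*μ1*(μ2-μ1) := by nlinarith [sq_nonneg (μ2-μ1), sq_nonneg μ1]
  have hsd : Real.sqrt ((μ1+μ2)^2 - 4*μ1*(μ2-μ1)) = μ1+μ2-4*μ1*ρ := by
    rw [hρ]; field_simp; ring
  have hsq : (μ1+μ2-4*μ1*ρ)^2 = (μ1+μ2)^2 - 4*μ1*(μ2-μ1) := by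
    rw [← hsd]; exact Real.sq_sqrt hD
  have hnn : 0 ≤ μ1+μ2-4*μ1*ρ := hsd ▸ Real.sqrt_nonneg _
  have hq4 : 4*μ1*(4*μ1*ρ^2 - 2*(μ1+μ2)*ρ + (μ2-μ1)) = 0 := by linear_combination hsq
  have hq : 4*μ1*ρ^2 - 2*(μ1+μ2)*ρ + (μ2-μ1) = 0 := by
    rcases mul_eq_zero.mp hq4 with h | h
    · exact absurd h (by positivity)
    · exact h
  have hr0 : 0 < ρ := by
    by_contra hcon
    push_neg at hcon
    nlinarith [hq, mul_nonneg hμ1.le (sq_nonneg ρ),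
      mul_nonneg (by linarith : (0:ℝ) ≤ μ1+μ2) (by linarith : (0:ℝ) ≤ -ρ)]
  have hr2 : 2*ρ < 1 := by
    by_contra hcon
    push_neg at hcon
    nlinarith [hq, hnn, mul_nonneg (by linarith : (0:ℝ) ≤ 2*ρ-1) hnn]
  have he : 0 < 1-2*ρ := by linarith
  have hden : 0 < μ2-2*μ1*ρ := by nlinarith
  have hdiag : (1-2*ρ)/μ1 = 1/(μ2-2*μ1*ρ) := by
    rw [div_eq_div_iff hμ1.ne' hden.ne']; linear_combination hq
  have htA : 0 < (1-2*ρ)/μ1 := by positivity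
  have hQd : 0 < μ1^2+μ2^2-2*ρ*μ1*μ2 := by nlinarith [sq_nonneg (μ1-μ2), mul_pos hμ1 hμ2]
  have harg : 2*(1-ρ)/(μ1^2+μ2^2-2*ρ*μ1*μ2) = ((1-2*ρ)/μ1)^2 := by
    rw [div_pow, div_eq_div_iff hQd.ne' (by positivity)]
    linear_combination (-((1-2*ρ)*μ2+μ1)) * hq
  have hsqrt : (1-2*ρ)/μ1 = Real.sqrt (2*(1-ρ)/(μ1^2+μ2^2-2*ρ*μ1*μ2)) := by
    rw [harg, Real.sqrt_sq htA.le]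
  have hrr : 4*ρ^2 ≤ 1 := by nlinarith
  have hd0 : ∀ t s : ℝ, 0 < t → 0 < s → 0 < t*s-ρ^2*(min t s)^2 := fun t s ht hs =>
    dpos ρ t s hrr ht hs
  have hne : ∀ t s : ℝ, Set.Nonempty {v : ℝ | ∃ x y : ℝ, 1 + μ1 * t ≤ x ∧ 1 + μ2 * s ≤ y ∧
      v = ![x, y] ⬝ᵥ ((covM ρ t s)⁻¹ *ᵥ ![x, y])} := by
    intro t s
    exact ⟨_, ⟨1+μ1*t, 1+μ2*s, le_refl _, le_refl _, rfl⟩⟩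
  have hlb : ∀ t s : ℝ, 0 < t → 0 < s →
      ∀ v ∈ {v : ℝ | ∃ x y : ℝ, 1 + μ1 * t ≤ x ∧ 1 + μ2 * s ≤ y ∧
        v = ![x, y] ⬝ᵥ ((covM ρ t s)⁻¹ *ᵥ ![x, y])}, 4*(μ2+(1-2*ρ)*μ1) ≤ v := by
    rintro t s ht hs v ⟨x, y, hx, hy, rfl⟩
    rw [quad_eval ρ t s x y (ne_of_gt (hd0 t s ht hs)), le_div_iff₀ (hd0 t s ht hs)]
    exact pointwise ρ μ1 μ2 hq hr0 hr2 hμ1 hμ12 t s x y ht hs hx hy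
  have hgl : ∀ t s : ℝ, 0 < t → 0 < s → 4*(μ2+(1-2*ρ)*μ1) ≤ gfun ρ μ1 μ2 t s := by
    intro t s ht hs
    unfold gfun
    exact le_csInf (hne t s) (hlb t s ht hs)
  have hXe : μ1*((1-2*ρ)/μ1) = 1-2*ρ := by field_simp
  -- corner equality at the optimum
  have hceq : ((1-2*ρ)/μ1)*(1+μ1*((1-2*ρ)/μ1))^2
      - 2*ρ*((1-2*ρ)/μ1)*(1+μ1*((1-2*ρ)/μ1))*(1+μ2*((1-2*ρ)/μ1))
      + ((1-2*ρ)/μ1)*(1+μ2*((1-2*ρ)/μ1))^2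
      = 4*(μ2+(1-2*ρ)*μ1)*(((1-2*ρ)/μ1)*((1-2*ρ)/μ1)-ρ^2*((1-2*ρ)/μ1)^2) := by
    have hid := hid1 ρ μ1 μ2 ((1-2*ρ)/μ1) ((1-2*ρ)/μ1) hq
    have hz : (1-2*ρ)^4*μ1*(2*(1-ρ)*(μ1*((1-2*ρ)/μ1))*((μ1*((1-2*ρ)/μ1))-(1-2*ρ))^2
        + (μ1*(((1-2*ρ)/μ1)-((1-2*ρ)/μ1)))*((1-2*ρ)^2
          - 2*(1-2*ρ)*(2-3*ρ+6*ρ^2-4*ρ^3)*(μ1*((1-2*ρ)/μ1))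
          + ((1+4*ρ-4*ρ^2-16*ρ^3+16*ρ^4)+2*(1-ρ))*(μ1*((1-2*ρ)/μ1))^2
          + (1+4*ρ-4*ρ^2-16*ρ^3+16*ρ^4)*(μ1*((1-2*ρ)/μ1))*(μ1*(((1-2*ρ)/μ1)-((1-2*ρ)/μ1))))) = 0 := by
      rw [hXe]; ring
    rw [hz] at hid
    have hpos : (0:ℝ) < μ1^2*(1-2*ρ)^6 := by positivity
    have := mul_eq_zero.mp hid
    rcases this with h | h
    · exact absurd h (ne_of_gt hpos)
    · linarith [sub_eq_zero.mp h]
  have hVmem : 4*(μ2+(1-2*ρ)*μ1) ∈ {v : ℝ | ∃ x y : ℝ,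
      1 + μ1 * ((1-2*ρ)/μ1) ≤ x ∧ 1 + μ2 * ((1-2*ρ)/μ1) ≤ y ∧
      v = ![x, y] ⬝ᵥ ((covM ρ ((1-2*ρ)/μ1) ((1-2*ρ)/μ1))⁻¹ *ᵥ ![x, y])} := by
    refine ⟨1+μ1*((1-2*ρ)/μ1), 1+μ2*((1-2*ρ)/μ1), le_refl _, le_refl _, ?_⟩
    rw [quad_eval ρ _ _ _ _ (ne_of_gt (hd0 _ _ htA htA)),
      eq_div_iff (ne_of_gt (hd0 _ _ htA htA))]
    rw [min_self]
    linarith [hceq]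
  have hgA : gfun ρ μ1 μ2 ((1-2*ρ)/μ1) ((1-2*ρ)/μ1) = 4*(μ2+(1-2*ρ)*μ1) := by
    have h1 : gfun ρ μ1 μ2 ((1-2*ρ)/μ1) ((1-2*ρ)/μ1) ≤ 4*(μ2+(1-2*ρ)*μ1) := by
      unfold gfun
      exact csInf_le ⟨4*(μ2+(1-2*ρ)*μ1), hlb _ _ htA htA⟩ hVmem
    exact le_antisymm h1 (hgl _ _ htA htA)
  have hgA' : gfun ρ μ1 μ2 ((1-2*ρ)/μ1) (1/(μ2-2*μ1*ρ)) = 4*(μ2+(1-2*ρ)*μ1) := by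
    rw [← hdiag]; exact hgA
  refine ⟨⟨⟨(1-2*ρ)/μ1, 1/(μ2-2*μ1*ρ), htA, by positivity, hgA'.symm⟩, ?_⟩, hgA', ?_, hdiag, hsqrt⟩
  · rintro v ⟨t, s, ht, hs, rfl⟩
    exact hgl t s ht hs
  · -- uniqueness
    intro t s ht hs hg
    have hd := hd0 t s ht hs
    have hmt : min t s ≤ t := min_le_left t s
    have hms : min t s ≤ s := min_le_right t s
    have hm0 : 0 < min t s := lt_min ht hs
    have ha0 : 0 < 1+μ1*t := by positivity
    have hb0 : 0 < 1+μ2*s := by positivity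
    unfold gfun at hg
    -- universal lower bounds give box constraints
    have hub_b : (1+μ2*s)^2/s ≤ 4*(μ2+(1-2*ρ)*μ1) := by
      rw [← hg]
      refine le_csInf (hne t s) ?_
      rintro v ⟨x, y, hx, hy, rfl⟩
      rw [quad_eval ρ t s x y (ne_of_gt hd), div_le_div_iff₀ hs hd]
      exact edge_lb ρ (min t s) s t x y (1+μ2*s) hb0.le hy hd.le
    have hub_a : (1+μ1*t)^2/t ≤ 4*(μ2+(1-2*ρ)*μ1) := by
      rw [← hg]
      refine le_csInf (hne t s) ?_
      rintro v ⟨x, y, hx, hy, rfl⟩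
      rw [quad_eval ρ t s x y (ne_of_gt hd), div_le_div_iff₀ ht hd]
      exact edge_lb2 ρ (min t s) s t x y (1+μ1*t) ha0.le hx hd.le
    have hb2 : (1+μ2*s)^2 ≤ 4*(μ2+(1-2*ρ)*μ1)*s := by
      rw [div_le_iff₀ hs] at hub_b; linarith
    have ha2 : (1+μ1*t)^2 ≤ 4*(μ2+(1-2*ρ)*μ1)*t := by
      rw [div_le_iff₀ ht] at hub_a; linarith
    have h1 : μ1*(1+μ1*t)^2 - 4*(μ2+(1-2*ρ)*μ1)*(1+μ1*t) + 4*(μ2+(1-2*ρ)*μ1) ≤ 0 :=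
      haux μ1 (4*(μ2+(1-2*ρ)*μ1)) t hμ1 ha2
    have h2 : μ2*(1+μ2*s)^2 - 4*(μ2+(1-2*ρ)*μ1)*(1+μ2*s) + 4*(μ2+(1-2*ρ)*μ1) ≤ 0 :=
      haux μ2 (4*(μ2+(1-2*ρ)*μ1)) s hμ2 hb2
    have hkkt1 : ρ*(1+μ2*s) ≤ 1+μ1*t :=
      kkt1 ρ μ1 μ2 (1+μ1*t) (1+μ2*s) hq hr0 hr2 hμ1 hμ12
        (le_add_of_nonneg_right (mul_pos hμ2 hs).le) h1 h2
    have hsab : ρ*(min t s)*(1+μ2*s) ≤ s*(1+μ1*t) :=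
      sab_lem ρ s (min t s) (1+μ1*t) (1+μ2*s) hr0 hms hb0 hs hkkt1
    have hkkt2 : ρ*(min t s)*(1+μ1*t) ≤ t*(1+μ2*s) :=
      kkt2_lem ρ μ1 μ2 t s hr0 hr2 hμ1 hμ12 ht hs
    -- corner value is a lower bound
    have hclb : ∀ v ∈ {v : ℝ | ∃ x y : ℝ, 1 + μ1 * t ≤ x ∧ 1 + μ2 * s ≤ y ∧
        v = ![x, y] ⬝ᵥ ((covM ρ t s)⁻¹ *ᵥ ![x, y])},
        (s*(1+μ1*t)^2 - 2*ρ*(min t s)*(1+μ1*t)*(1+μ2*s) + t*(1+μ2*s)^2)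
          /(t*s-ρ^2*(min t s)^2) ≤ v := by
      rintro v ⟨x, y, hx, hy, rfl⟩
      rw [quad_eval ρ t s x y (ne_of_gt hd), div_le_div_iff₀ hd hd]
      have hconv := conv_lb ρ (min t s) t s x y (1+μ1*t) (1+μ2*s) hm0 hmt hms
        (by linarith : (0:ℝ) ≤ 1-2*ρ) hx hy hsab hkkt2
      exact mul_le_mul_of_nonneg_right hconv hd.le
    have hCle : (s*(1+μ1*t)^2 - 2*ρ*(min t s)*(1+μ1*t)*(1+μ2*s) + t*(1+μ2*s)^2)
        /(t*s-ρ^2*(min t s)^2) ≤ 4*(μ2+(1-2*ρ)*μ1) := by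
      rw [← hg]; exact le_csInf (hne t s) hclb
    have hCle' : s*(1+μ1*t)^2 - 2*ρ*(min t s)*(1+μ1*t)*(1+μ2*s) + t*(1+μ2*s)^2
        ≤ 4*(μ2+(1-2*ρ)*μ1)*(t*s-ρ^2*(min t s)^2) := by
      rw [div_le_iff₀ hd] at hCle; linarith
    have hCge := pointwise ρ μ1 μ2 hq hr0 hr2 hμ1 hμ12 t s (1+μ1*t) (1+μ2*s) ht hs
      (le_refl _) (le_refl _)
    have hCeq : s*(1+μ1*t)^2 - 2*ρ*(min t s)*(1+μ1*t)*(1+μ2*s) + t*(1+μ2*s)^2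
        = 4*(μ2+(1-2*ρ)*μ1)*(t*s-ρ^2*(min t s)^2) := le_antisymm hCle' hCge
    have hposf : (0:ℝ) < (1-2*ρ)^4*μ1 := by positivity
    rcases le_total t s with hts | hst
    · have hm : min t s = t := min_eq_left hts
      rw [hm] at hCeq
      have hid := hid1 ρ μ1 μ2 t s hq
      have hz : μ1^2*(1-2*ρ)^6*((s*(1+μ1*t)^2 - 2*ρ*t*(1+μ1*t)*(1+μ2*s) + t*(1+μ2*s)^2)
          - 4*(μ2+(1-2*ρ)*μ1)*(t*s-ρ^2*t^2)) = 0 := by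
        rw [show (s*(1+μ1*t)^2 - 2*ρ*t*(1+μ1*t)*(1+μ2*s) + t*(1+μ2*s)^2)
          - 4*(μ2+(1-2*ρ)*μ1)*(t*s-ρ^2*t^2) = 0 from by linarith [hCeq]]
        ring
      rw [hid] at hz
      have hG0 : 2*(1-ρ)*(μ1*t)*((μ1*t)-(1-2*ρ))^2
          + (μ1*(s-t))*((1-2*ρ)^2 - 2*(1-2*ρ)*(2-3*ρ+6*ρ^2-4*ρ^3)*(μ1*t)
          + ((1+4*ρ-4*ρ^2-16*ρ^3+16*ρ^4)+2*(1-ρ))*(μ1*t)^2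
          + (1+4*ρ-4*ρ^2-16*ρ^3+16*ρ^4)*(μ1*t)*(μ1*(s-t))) = 0 := by
        rcases mul_eq_zero.mp hz with h | h
        · exact absurd h (ne_of_gt hposf)
        · exact h
      have := cert1_eq ρ (μ1*t) (μ1*(s-t)) hr0 hr2 (mul_pos hμ1 ht)
        (mul_nonneg hμ1.le (by linarith)) hG0
      obtain ⟨hW0, hX0⟩ := this
      have hst' : s = t := by
        rcases mul_eq_zero.mp hW0 with h | h
        · exact absurd h hμ1'
        · linarith [sub_eq_zero.mp h]
      have ht' : t = (1-2*ρ)/μ1 := by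
        rw [eq_div_iff hμ1']; linarith [hX0]
      exact ⟨ht', by rw [← hdiag, hst', ht']⟩
    · have hm : min t s = s := min_eq_right hst
      rw [hm] at hCeq
      have hid := hid2 ρ μ1 μ2 t s hq
      have hz : μ1^2*(1-2*ρ)^6*((s*(1+μ1*t)^2 - 2*ρ*s*(1+μ1*t)*(1+μ2*s) + t*(1+μ2*s)^2)
          - 4*(μ2+(1-2*ρ)*μ1)*(s*t-ρ^2*s^2)) = 0 := by
        rw [show (s*(1+μ1*t)^2 - 2*ρ*s*(1+μ1*t)*(1+μ2*s) + t*(1+μ2*s)^2)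
          - 4*(μ2+(1-2*ρ)*μ1)*(s*t-ρ^2*s^2) = 0 from by linarith [hCeq]]
        ring
      rw [hid] at hz
      have hG0 : 2*(1-ρ)*(μ1*s)*((μ1*s)-(1-2*ρ)+((1-2*ρ)/2)*(μ1*(t-s)))^2
          + (μ1*(t-s))*(((μ1*s)-(1-2*ρ))^2 + (1-2*ρ)^2*((1+ρ)/2)*(μ1*s)*(μ1*(t-s))) = 0 := by
        rcases mul_eq_zero.mp hz with h | h
        · exact absurd h (ne_of_gt hposf)
        · exact h
      have := cert2_eq ρ (μ1*s) (μ1*(t-s)) hr0 hr2 (mul_pos hμ1 hs)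
        (mul_nonneg hμ1.le (by linarith)) hG0
      obtain ⟨hW0, hY0⟩ := this
      have hst' : t = s := by
        rcases mul_eq_zero.mp hW0 with h | h
        · exact absurd h hμ1'
        · linarith [sub_eq_zero.mp h]
      have hs' : s = (1-2*ρ)/μ1 := by
        rw [eq_div_iff hμ1']; linarith [hY0]
      exact ⟨by rw [hst', hs'], by rw [← hdiag, hs']⟩
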